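/- Let f : ℕ^k → ℕ satisfy f(0) = 0, f weakly increasing, f = L + P with L(x) = b·x linear and P periodic with lattice of periodicity containing λ_k e_k, and suppose f is meager in the last coordinate: f(x + λ_k e_k) = f(x) + 1 for all x ∈ ℕ^k. Extend f = L + P to all of ℤ^k. Define g(x₁,...,x_{k−1}) = −c − min{ x_k ∈ ℤ : f(x₁,...,x_k) ≥ 0 }, where c = −min{ x_k ∈ ℤ : f(0,...,0,x_k) ≥ 0 }. Then 0 ≤ c < λ_k, g is weakly increasing with g(0) = 0, and f(x₁,...,x_k) = ⌊(g(x₁,...,x_{k−1}) + x_k + c)/λ_k⌋ for all (x₁,...,x_k) ∈ ℕ^k. -/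

import Mathlib

/-- Core of Lemma 4.3: let `f : ℤ^{k−1} × ℤ → ℤ` be the extension of a meager ZILP
function (meager in the last coordinate: `f(x + λₖeₖ) = f(x) + 1`). With
`c = −min{z : f(0,z) ≥ 0}` and `g(y) = −c − min{z : f(y,z) ≥ 0}`, we have
`0 ≤ c < λₖ`, `g` is increasing with `g(0) = 0`, and
`f(y,z) = ⌊(g(y) + z + c)/λₖ⌋` on `ℕ^k`. -/
theorem meager_reduction (m : ℕ) (f : (Fin m → ℤ) → ℤ → ℤ)
    (h0 : f 0 0 = 0)
    (hmono : ∀ y y' z z', y ≤ y' → z ≤ z' → f y z ≤ f y' z')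
    (lamk : ℕ) (hlamk : 0 < lamk)
    -- f = L + P with L(x) = b·y + bₖz and P periodic (lattice containing λₖ eₖ)
    (b : Fin m → ℚ) (bk : ℚ) (P : (Fin m → ℤ) → ℤ → ℚ)
    (hdec : ∀ y z, (f y z : ℚ) = ∑ i, b i * (y i : ℚ) + bk * z + P y z)
    (lam : Fin m → ℕ) (hlam : ∀ i, 0 < lam i)
    (hPy : ∀ (i : Fin m) y z, P (Function.update y i (y i + lam i)) z = P y z)
    (hPz : ∀ y z, P y (z + lamk) = P y z)
    -- meagerness in the last coordinate
    (hmeager : ∀ y z, f y (z + lamk) = f y z + 1) :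
    ∃ (c : ℤ) (g : (Fin m → ℤ) → ℤ),
      IsLeast {z : ℤ | 0 ≤ f 0 z} (-c) ∧
      0 ≤ c ∧ c < lamk ∧
      (∀ y, IsLeast {z : ℤ | 0 ≤ f y z} (-c - g y)) ∧
      Monotone g ∧ g 0 = 0 ∧
      (∀ (y : Fin m → ℤ) (z : ℤ), 0 ≤ y → 0 ≤ z →
        f y z = ⌊((g y + z + c : ℤ) : ℚ) / (lamk : ℚ)⌋) := by
  classical
  -- iterate meagerness over ℤ
  have hiter : ∀ y z (n : ℤ), f y (z + n * lamk) = f y z + n := by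
    intro y z n
    induction n using Int.induction_on with
    | zero => simp
    | succ n ih =>
        have h := hmeager y (z + n * lamk)
        have : z + (n + 1 : ℤ) * lamk = z + n * lamk + lamk := by ring
        rw [this, h, ih]; ring
    | pred n ih =>
        have h := hmeager y (z + (-n - 1 : ℤ) * lamk)
        have e : z + (-n - 1 : ℤ) * lamk + lamk = z + (-n : ℤ) * lamk := by ring
        rw [e, ih] at h
        omega
  -- existence of the minimum
  have exmin : ∀ y, ∃ M, IsLeast {z : ℤ | 0 ≤ f y z} M := by
    intro y
    have hbdd : ∀ z ∈ {z : ℤ | 0 ≤ f y z}, -(f y 0 + 1) * lamk ≤ z := by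
      intro z hz
      by_contra hc
      push_neg at hc
      have h1 : f y z ≤ f y (0 + (-(f y 0 + 1)) * lamk) := by
        apply hmono _ _ _ _ le_rfl
        have : (0 : ℤ) + (-(f y 0 + 1)) * lamk = -(f y 0 + 1) * lamk := by ring
        omega
      rw [hiter] at h1
      simp only [Set.mem_setOf_eq] at hz
      omega
    have hne : ∃ z, z ∈ {z : ℤ | 0 ≤ f y z} := by
      refine ⟨0 + (-(f y 0)) * lamk, ?_⟩
      simp only [Set.mem_setOf_eq, hiter]
      omega
    obtain ⟨M, hM1, hM2⟩ := Int.exists_least_of_bdd ⟨_, hbdd⟩ hne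
    exact ⟨M, hM1, hM2⟩
  choose M hM using exmin
  -- f y (M y) = 0 and f y (M y - 1) < 0
  have hMmem : ∀ y, 0 ≤ f y (M y) := fun y => (hM y).1
  have hMle : ∀ y z, 0 ≤ f y z → M y ≤ z := fun y z hz => (hM y).2 hz
  have hMneg : ∀ y z, z < M y → f y z < 0 := by
    intro y z hz
    by_contra hc
    push_neg at hc
    exact absurd (hMle y z hc) (by omega)
  have hM0 : ∀ y, f y (M y) = 0 := by
    intro y
    have h1 := hiter y (M y - lamk) 1
    have h2 : f y (M y - lamk) < 0 := hMneg y _ (by omega)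
    have e : M y - lamk + 1 * lamk = M y := by ring
    rw [e] at h1
    have := hMmem y
    omega
  refine ⟨-M 0, fun y => M 0 - M y, ?_, ?_, ?_, ?_, ?_, ?_, ?_⟩
  · simpa using hM 0
  · have : M 0 ≤ 0 := hMle 0 0 (by omega)
    omega
  · have h1 := hiter 0 (0 : ℤ) (-1)
    have e : (0 : ℤ) + (-1) * lamk = -lamk := by ring
    rw [e, h0] at h1
    have : f 0 (-(lamk : ℤ)) < 0 := by omega
    by_contra hc
    push_neg at hc
    have : 0 ≤ f 0 (-(lamk:ℤ)) := by
      have := hMmem 0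
      have hle : M 0 ≤ -(lamk : ℤ) := by omega
      exact le_trans this (hmono _ _ _ _ le_rfl hle)
    omega
  · intro y
    have : -(-M 0) - (M 0 - M y) = M y := by ring
    rw [this]
    exact hM y
  · intro y y' hyy'
    have hMy' : M y' ≤ M y := by
      apply hMle
      exact le_trans (hMmem y) (hmono _ _ _ _ hyy' le_rfl)
    simp only
    omega
  · simp
  · intro y z _ _
    set j := f y z with hj
    have hlow : M y + j * lamk ≤ z := by
      by_contra hc
      push_neg at hc
      have h1 : f y z ≤ f y (M y - 1 + j * lamk) := by
        apply hmono _ _ _ _ le_rfl; omega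
      rw [hiter] at h1
      have h2 : f y (M y - 1) < 0 := hMneg y _ (by omega)
      omega
    have hhigh : z < M y + (j + 1) * lamk := by
      by_contra hc
      push_neg at hc
      have h1 : f y (M y + (j + 1) * lamk) ≤ f y z := by
        apply hmono _ _ _ _ le_rfl; omega
      rw [hiter] at h1
      have := hM0 y
      omega
    have he : (M 0 - M y + z + -M 0 : ℤ) = z - M y := by ring
    rw [he]
    symm
    rw [Int.floor_eq_iff]
    have hpos : (0 : ℚ) < (lamk : ℚ) := by exact_mod_cast hlamk
    constructor
    · rw [le_div_iff₀ hpos]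
      push_cast
      have : (j : ℤ) * lamk ≤ z - M y := by omega
      exact_mod_cast this
    · rw [div_lt_iff₀ hpos]
      push_cast
      have : (z - M y : ℤ) < (j + 1) * lamk := by omega
      exact_mod_cast this
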